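/- Fix 0 < α < 1/2 with normal α-quantile z_α satisfying |z_α| > 1, let c ≥ 0 with |z_α| ≥ 2c, and 0 < ζ < 1. Let ρ* be the unique nonnegative solution of c·ρ + ln F_α(|z_α| + ρ) = ln(1-ζ). Then ρ* ≤ (-ln(1 - z_α^{-2}) - ln(1-ζ)) / (|z_α| - c). -/

import Mathlib

open MeasureTheory Real

open Filter

lemma gauss_int : Integrable (fun t : ℝ => Real.exp (-t ^ 2 / 2)) := by
  have := integrable_exp_neg_mul_sq (by norm_num : (0:ℝ) < 1/2)
  convert this using 2 with t
  ring_nf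

lemma key (x : ℝ) (hx : 0 < x) :
    ∫ t in Set.Ioi x, (1 + (t ^ 2)⁻¹) * Real.exp (-t ^ 2 / 2)
      = Real.exp (-x ^ 2 / 2) / x := by
  have hderiv : ∀ t ∈ Set.Ici x, HasDerivAt (fun t : ℝ => -t⁻¹ * Real.exp (-t ^ 2 / 2))
      ((1 + (t ^ 2)⁻¹) * Real.exp (-t ^ 2 / 2)) t := by
    intro t ht
    have ht0 : t ≠ 0 := (lt_of_lt_of_le hx ht).ne'
    have h1 : HasDerivAt (fun t : ℝ => -t⁻¹) ((t ^ 2)⁻¹) t := by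
      simpa using (hasDerivAt_inv ht0).fun_neg
    have h2 : HasDerivAt (fun t : ℝ => Real.exp (-t ^ 2 / 2)) (-t * Real.exp (-t ^ 2 / 2)) t := by
      have h3 : HasDerivAt (fun t : ℝ => -t ^ 2 / 2) (-t) t := by
        have := ((hasDerivAt_pow 2 t).fun_neg).div_const 2
        refine this.congr_deriv ?_
        push_cast
        ring
      simpa [mul_comm] using h3.exp
    have := h1.fun_mul h2
    refine this.congr_deriv ?_
    field_simp
    ring
  have hint : IntegrableOn (fun t : ℝ => (1 + (t ^ 2)⁻¹) * Real.exp (-t ^ 2 / 2)) (Set.Ioi x) := by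
    apply Integrable.mono' ((gauss_int.const_mul (1 + (x ^ 2)⁻¹)).integrableOn)
    · apply ContinuousOn.aestronglyMeasurable _ measurableSet_Ioi
      apply ContinuousOn.mul
      · exact continuousOn_const.add (ContinuousOn.inv₀ (by fun_prop) fun t ht => by
          have : 0 < t := hx.trans ht; positivity)
      · fun_prop
    · filter_upwards [ae_restrict_mem measurableSet_Ioi] with t ht
      have ht0 : 0 < t := hx.trans ht
      have h1 : (t ^ 2)⁻¹ ≤ (x ^ 2)⁻¹ := by
        apply inv_anti₀ (by positivity) (by nlinarith [le_of_lt (Set.mem_Ioi.mp ht)])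
      have h2 : (0:ℝ) < Real.exp (-t ^ 2 / 2) := Real.exp_pos _
      rw [Real.norm_eq_abs, abs_of_nonneg (by positivity)]
      nlinarith
  have hlim : Tendsto (fun t : ℝ => -t⁻¹ * Real.exp (-t ^ 2 / 2)) atTop (nhds 0) := by
    have h1 : Tendsto (fun t : ℝ => -t⁻¹) atTop (nhds (-0 : ℝ)) :=
      (tendsto_inv_atTop_zero : Tendsto (fun t : ℝ => t⁻¹) atTop (nhds 0)).neg
    rw [neg_zero] at h1
    have h2 : Tendsto (fun t : ℝ => Real.exp (-t ^ 2 / 2)) atTop (nhds 0) := by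
      apply Real.tendsto_exp_atBot.comp
      apply Tendsto.atBot_div_const (by norm_num : (0:ℝ) < 2)
      exact tendsto_neg_atBot_iff.mpr (tendsto_pow_atTop two_ne_zero)
    have := h1.mul h2
    norm_num at this
    simpa [neg_mul] using this
  have := integral_Ioi_of_hasDerivAt_of_tendsto' hderiv hint hlim
  rw [this]
  field_simp
  ring

lemma gauss2_int (x : ℝ) (hx : 0 < x) :
    IntegrableOn (fun t : ℝ => (1 + (t ^ 2)⁻¹) * Real.exp (-t ^ 2 / 2)) (Set.Ioi x) := by
  apply Integrable.mono' ((gauss_int.const_mul (1 + (x ^ 2)⁻¹)).integrableOn)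
  · apply ContinuousOn.aestronglyMeasurable _ measurableSet_Ioi
    apply ContinuousOn.mul
    · exact continuousOn_const.add (ContinuousOn.inv₀ (by fun_prop) fun t ht => by
        have : 0 < t := hx.trans ht; positivity)
    · fun_prop
  · filter_upwards [ae_restrict_mem measurableSet_Ioi] with t ht
    have ht0 : 0 < t := hx.trans ht
    have h1 : (t ^ 2)⁻¹ ≤ (x ^ 2)⁻¹ := by
      apply inv_anti₀ (by positivity) (by nlinarith [le_of_lt (Set.mem_Ioi.mp ht)])
    have h2 : (0:ℝ) < Real.exp (-t ^ 2 / 2) := Real.exp_pos _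
    rw [Real.norm_eq_abs, abs_of_nonneg (by positivity)]
    nlinarith

lemma tail_upper (y : ℝ) (hy : 0 < y) :
    ∫ t in Set.Ioi y, Real.exp (-t ^ 2 / 2) ≤ Real.exp (-y ^ 2 / 2) / y := by
  rw [← key y hy]
  apply setIntegral_mono_on gauss_int.integrableOn (gauss2_int y hy) measurableSet_Ioi
  intro t ht
  have ht0 : 0 < t := hy.trans ht
  have h2 : (0:ℝ) < Real.exp (-t ^ 2 / 2) := Real.exp_pos _
  nlinarith [inv_pos.mpr (pow_pos ht0 2)]

lemma tail_lower (y : ℝ) (hy : 0 < y) :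
    (1 - (y ^ 2)⁻¹) * Real.exp (-y ^ 2 / 2) / y ≤ ∫ t in Set.Ioi y, Real.exp (-t ^ 2 / 2) := by
  have hsub : IntegrableOn (fun t : ℝ => (t ^ 2)⁻¹ * Real.exp (-t ^ 2 / 2)) (Set.Ioi y) := by
    have h := (gauss2_int y hy).sub gauss_int.integrableOn
    apply h.congr
    filter_upwards with t
    show (1 + (t ^ 2)⁻¹) * Real.exp (-t ^ 2 / 2) - Real.exp (-t ^ 2 / 2) = _
    ring
  have hsplit : ∫ t in Set.Ioi y, (1 + (t ^ 2)⁻¹) * Real.exp (-t ^ 2 / 2)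
      = (∫ t in Set.Ioi y, Real.exp (-t ^ 2 / 2))
        + ∫ t in Set.Ioi y, (t ^ 2)⁻¹ * Real.exp (-t ^ 2 / 2) := by
    rw [← integral_add gauss_int.integrableOn hsub]
    congr 1; ext t; ring
  have hbound : ∫ t in Set.Ioi y, (t ^ 2)⁻¹ * Real.exp (-t ^ 2 / 2)
      ≤ (y ^ 2)⁻¹ * (Real.exp (-y ^ 2 / 2) / y) := by
    calc ∫ t in Set.Ioi y, (t ^ 2)⁻¹ * Real.exp (-t ^ 2 / 2)
        ≤ ∫ t in Set.Ioi y, (y ^ 2)⁻¹ * Real.exp (-t ^ 2 / 2) := by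
          apply setIntegral_mono_on hsub (gauss_int.const_mul _).integrableOn measurableSet_Ioi
          intro t ht
          have ht0 : 0 < t := hy.trans ht
          have h1 : (t ^ 2)⁻¹ ≤ (y ^ 2)⁻¹ :=
            inv_anti₀ (by positivity) (by nlinarith [le_of_lt (Set.mem_Ioi.mp ht)])
          have h2 : (0:ℝ) < Real.exp (-t ^ 2 / 2) := Real.exp_pos _
          nlinarith
      _ = (y ^ 2)⁻¹ * ∫ t in Set.Ioi y, Real.exp (-t ^ 2 / 2) := by
          rw [integral_const_mul]
      _ ≤ (y ^ 2)⁻¹ * (Real.exp (-y ^ 2 / 2) / y) := by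
          exact mul_le_mul_of_nonneg_left (tail_upper y hy) (by positivity)
  have hkey := key y hy
  rw [hsplit] at hkey
  have : (∫ t in Set.Ioi y, Real.exp (-t ^ 2 / 2))
      = Real.exp (-y ^ 2 / 2) / y - ∫ t in Set.Ioi y, (t ^ 2)⁻¹ * Real.exp (-t ^ 2 / 2) := by
    linarith
  rw [this]
  have : (1 - (y ^ 2)⁻¹) * Real.exp (-y ^ 2 / 2) / y
      = Real.exp (-y ^ 2 / 2) / y - (y ^ 2)⁻¹ * (Real.exp (-y ^ 2 / 2) / y) := by ring
  linarith

/-- Upper bound on the root `ρ*` of `cρ + ln F_α(|z_α| + ρ) = ln(1-ζ)`: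
if `|z_α| > 1` and `|z_α| ≥ 2c`, then
`ρ* ≤ (-ln(1 - z_α⁻²) - ln(1-ζ))/(|z_α| - c)`. -/
theorem rho_ES_upper_bound
    (α c zα ζ : ℝ) (hα0 : 0 < α) (hα1 : α < 1 / 2) (hc : 0 ≤ c)
    (hz : ∫ t in Set.Iic zα, Real.exp (-t ^ 2 / 2) = α * Real.sqrt (2 * Real.pi))
    (hz1 : 1 < |zα|) (hzc : 2 * c ≤ |zα|)
    (hζ0 : 0 < ζ) (hζ1 : ζ < 1)
    (ρstar : ℝ) (hρ0 : 0 ≤ ρstar)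
    (hroot : c * ρstar +
      Real.log ((∫ t in Set.Ioi (|zα| + ρstar), Real.exp (-t ^ 2 / 2)) /
        (∫ t in Set.Ioi |zα|, Real.exp (-t ^ 2 / 2))) = Real.log (1 - ζ)) :
    ρstar ≤ (-Real.log (1 - (zα ^ 2)⁻¹) - Real.log (1 - ζ)) / (|zα| - c) := by
  set x := |zα| with hxdef
  set ρ := ρstar
  have hx1 : 1 < x := hz1
  have hx0 : 0 < x := lt_trans one_pos hx1
  have hxρ1 : 1 < x + ρ := by linarith
  have hxρ0 : 0 < x + ρ := by linarith
  have h1x : (0:ℝ) < 1 - (x ^ 2)⁻¹ := by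
    have hx2 : 1 < x ^ 2 := by nlinarith
    have : (x ^ 2)⁻¹ < 1 := inv_lt_one_of_one_lt₀ hx2
    linarith
  have h1xρ : (0:ℝ) < 1 - ((x + ρ) ^ 2)⁻¹ := by
    have hx2 : 1 < (x + ρ) ^ 2 := by nlinarith
    have : ((x + ρ) ^ 2)⁻¹ < 1 := inv_lt_one_of_one_lt₀ hx2
    linarith
  set A := ∫ t in Set.Ioi (x + ρ), Real.exp (-t ^ 2 / 2) with hAdef
  set B := ∫ t in Set.Ioi x, Real.exp (-t ^ 2 / 2) with hBdef
  have hBlow := tail_lower x hx0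
  have hAlow := tail_lower (x + ρ) hxρ0
  have hAup := tail_upper (x + ρ) hxρ0
  have hB0 : 0 < B :=
    lt_of_lt_of_le (by positivity : (0:ℝ) < (1 - (x ^ 2)⁻¹) * Real.exp (-x ^ 2 / 2) / x) hBlow
  have hA0 : 0 < A :=
    lt_of_lt_of_le
      (by positivity : (0:ℝ) < (1 - ((x + ρ) ^ 2)⁻¹) * Real.exp (-(x + ρ) ^ 2 / 2) / (x + ρ))
      hAlow
  rw [Real.log_div hA0.ne' hB0.ne'] at hroot
  have hlogA : Real.log A ≤ -(x + ρ) ^ 2 / 2 - Real.log (x + ρ) := by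
    have := Real.log_le_log hA0 hAup
    rwa [Real.log_div (Real.exp_pos _).ne' hxρ0.ne', Real.log_exp] at this
  have hlogB : Real.log (1 - (x ^ 2)⁻¹) + (-x ^ 2 / 2) - Real.log x ≤ Real.log B := by
    have := Real.log_le_log (by positivity) hBlow
    rwa [Real.log_div (by positivity) hx0.ne', Real.log_mul h1x.ne' (Real.exp_pos _).ne',
      Real.log_exp] at this
  have hlx : Real.log x ≤ Real.log (x + ρ) := Real.log_le_log hx0 (by linarith)
  have hxc : 0 < x - c := by linarith
  have hkey : ρ * (x - c) ≤ -Real.log (1 - (x ^ 2)⁻¹) - Real.log (1 - ζ) := by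
    nlinarith [sq_nonneg ρ]
  have hgoal : ρ ≤ (-Real.log (1 - (x ^ 2)⁻¹) - Real.log (1 - ζ)) / (x - c) :=
    (le_div_iff₀ hxc).mpr hkey
  rwa [hxdef, sq_abs] at hgoal
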